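/- arXiv:1510.00973 — 3 statements merged into one kernel-verified Lean document; each statement's English description precedes it below -/
import Mathlib

section
/- Let $q \in (1, \infty)$, $s \in [1, \infty)$ and let $\omega$ be a weight. If $\omega \in A_q \cap RH_s$, then $\omega^s \in A_{s(q-1)+1}$ with $[\omega^s]_{A_{s(q-1)+1}} \le [\omega]_{A_q}^s [\omega]_{RH_s}^s$. -/
open MeasureTheory ENNReal

/-- The Muckenhoupt `A_q` characteristic of a weight `ω` with respect to a family of balls. -/
noncomputable def apConst {α : Type*} [MeasurableSpace α] (μ : Measure α)
    (Balls : Set (Set α)) (q : ℝ) (ω : α → ℝ≥0∞) : ℝ≥0∞ :=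
  ⨆ B ∈ Balls, ((∫⁻ x in B, ω x ∂μ) / μ B) *
    ((∫⁻ x in B, ω x ^ (1 - q / (q - 1)) ∂μ) / μ B) ^ (q - 1)

/-- The reverse Hölder `RH_s` characteristic:
`[ω]_{RH_s} = sup_B (⨍_B ω^s)^{1/s} (⨍_B ω)⁻¹`. -/
noncomputable def rhConst {α : Type*} [MeasurableSpace α] (μ : Measure α)
    (Balls : Set (Set α)) (s : ℝ) (ω : α → ℝ≥0∞) : ℝ≥0∞ :=
  ⨆ B ∈ Balls, ((∫⁻ x in B, ω x ^ s ∂μ) / μ B) ^ (1 / s) /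
    ((∫⁻ x in B, ω x ∂μ) / μ B)

private lemma stmt2_aux (a b c : ℝ≥0∞) (s t : ℝ) (hs : 0 < s)
    (hc0 : c ≠ 0) (hct : c ≠ ⊤) :
    a * b ^ (t * s) ≤ (c * b ^ t) ^ s * (a ^ (1 / s) / c) ^ s := by
  have hcs0 : c ^ s ≠ 0 := (ENNReal.rpow_pos (pos_iff_ne_zero.mpr hc0) hct).ne'
  have hcst : c ^ s ≠ ⊤ := ENNReal.rpow_ne_top_of_nonneg hs.le hct
  rw [ENNReal.mul_rpow_of_nonneg _ _ hs.le, ENNReal.div_rpow_of_nonneg _ _ hs.le,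
    ← ENNReal.rpow_mul b, ← ENNReal.rpow_mul a, one_div, inv_mul_cancel₀ hs.ne',
    ENNReal.rpow_one]
  refine le_of_eq (Eq.symm ?_)
  rw [mul_right_comm, ENNReal.mul_div_cancel hcs0 hcst]

/-- if `ω ∈ A_q ∩ RH_s` then `ω^s ∈ A_{s(q-1)+1}` with
`[ω^s]_{A_{s(q-1)+1}} ≤ [ω]_{A_q}^s [ω]_{RH_s}^s`. -/
theorem stmt2 {α : Type*} [MeasurableSpace α] (μ : Measure α)
    (Balls : Set (Set α)) (q s : ℝ) (hq : 1 < q) (hs : 1 ≤ s) (ω : α → ℝ≥0∞)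
    (hA : apConst μ Balls q ω < ⊤) (hR : rhConst μ Balls s ω < ⊤) :
    apConst μ Balls (s * (q - 1) + 1) (fun x => ω x ^ s) < ⊤ ∧
    apConst μ Balls (s * (q - 1) + 1) (fun x => ω x ^ s)
      ≤ apConst μ Balls q ω ^ s * rhConst μ Balls s ω ^ s := by
  have hs0 : (0:ℝ) < s := lt_of_lt_of_le one_pos hs
  have hq1 : (0:ℝ) < q - 1 := sub_pos.mpr hq
  have hQ1 : s * (q - 1) + 1 - 1 = (q - 1) * s := by ring
  have hQ1pos : (0:ℝ) < s * (q - 1) + 1 - 1 := by rw [hQ1]; positivity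
  have he1 : s * (1 - (s * (q - 1) + 1) / (s * (q - 1) + 1 - 1)) = 1 - q / (q - 1) := by
    have h1 : s * (q - 1) + 1 - 1 = s * (q - 1) := by ring
    rw [h1]
    field_simp
    ring
  have hint : ∀ x : ℝ≥0∞, (x ^ s) ^ (1 - (s * (q - 1) + 1) / (s * (q - 1) + 1 - 1))
      = x ^ (1 - q / (q - 1)) := by
    intro x
    rw [← ENNReal.rpow_mul, he1]
  have key : ∀ B ∈ Balls,
      ((∫⁻ x in B, ω x ^ s ∂μ) / μ B) *
        ((∫⁻ x in B, (ω x ^ s) ^ (1 - (s * (q - 1) + 1) / (s * (q - 1) + 1 - 1)) ∂μ) / μ B)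
          ^ (s * (q - 1) + 1 - 1)
      ≤ (((∫⁻ x in B, ω x ∂μ) / μ B) *
          ((∫⁻ x in B, ω x ^ (1 - q / (q - 1)) ∂μ) / μ B) ^ (q - 1)) ^ s *
        (((∫⁻ x in B, ω x ^ s ∂μ) / μ B) ^ (1 / s) /
          ((∫⁻ x in B, ω x ∂μ) / μ B)) ^ s := by
    intro B hB
    have hI : (∫⁻ x in B, (ω x ^ s) ^ (1 - (s * (q - 1) + 1) / (s * (q - 1) + 1 - 1)) ∂μ)
        = ∫⁻ x in B, ω x ^ (1 - q / (q - 1)) ∂μ :=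
      lintegral_congr fun x => hint (ω x)
    rw [hI]
    set a := (∫⁻ x in B, ω x ^ s ∂μ) / μ B with ha
    set b := (∫⁻ x in B, ω x ^ (1 - q / (q - 1)) ∂μ) / μ B with hb'
    set c := (∫⁻ x in B, ω x ∂μ) / μ B with hc
    have hGA : c * b ^ (q - 1) ≤ apConst μ Balls q ω :=
      le_biSup (fun B => ((∫⁻ x in B, ω x ∂μ) / μ B) *
        ((∫⁻ x in B, ω x ^ (1 - q / (q - 1)) ∂μ) / μ B) ^ (q - 1)) hB
    have hHA : a ^ (1 / s) / c ≤ rhConst μ Balls s ω :=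
      le_biSup (fun B => ((∫⁻ x in B, ω x ^ s ∂μ) / μ B) ^ (1 / s) /
        ((∫⁻ x in B, ω x ∂μ) / μ B)) hB
    have hGfin : c * b ^ (q - 1) ≠ ⊤ := (lt_of_le_of_lt hGA hA).ne
    have hHfin : a ^ (1 / s) / c ≠ ⊤ := (lt_of_le_of_lt hHA hR).ne
    rcases eq_or_ne b 0 with hb0 | hb0
    · rw [hb0, ENNReal.zero_rpow_of_pos hQ1pos, mul_zero]
      exact bot_le
    rcases eq_or_ne c 0 with hc0 | hc0
    · have ha0 : a = 0 := by
        by_contra han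
        have : a ^ (1 / s) ≠ 0 := by
          simp [ENNReal.rpow_eq_zero_iff, han, one_div, hs0.ne', hs0, hs0.le]
        rw [hc0, ENNReal.div_zero this] at hHfin
        exact hHfin rfl
      rw [ha0, zero_mul]
      exact bot_le
    rcases eq_or_ne c ⊤ with hct | hct
    · exfalso
      apply hGfin
      rw [hct, ENNReal.top_mul]
      simp [ENNReal.rpow_eq_zero_iff, hb0, hq1, not_lt.mpr hq1.le]
    · rw [hQ1]
      exact stmt2_aux a b c s (q - 1) hs0 hc0 hct
  have hle : apConst μ Balls (s * (q - 1) + 1) (fun x => ω x ^ s)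
      ≤ apConst μ Balls q ω ^ s * rhConst μ Balls s ω ^ s := by
    rw [apConst]
    refine iSup₂_le fun B hB => (key B hB).trans ?_
    refine mul_le_mul' (ENNReal.rpow_le_rpow ?_ hs0.le) (ENNReal.rpow_le_rpow ?_ hs0.le)
    · exact le_biSup (fun B => ((∫⁻ x in B, ω x ∂μ) / μ B) *
        ((∫⁻ x in B, ω x ^ (1 - q / (q - 1)) ∂μ) / μ B) ^ (q - 1)) hB
    · exact le_biSup (fun B => ((∫⁻ x in B, ω x ^ s ∂μ) / μ B) ^ (1 / s) /
        ((∫⁻ x in B, ω x ∂μ) / μ B)) hB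
  refine ⟨lt_of_le_of_lt hle ?_, hle⟩
  exact ENNReal.mul_lt_top (ENNReal.rpow_lt_top_of_nonneg hs0.le hA.ne)
    (ENNReal.rpow_lt_top_of_nonneg hs0.le hR.ne)
end

section
/- On the real line, for $s > 1$ there exist constants $0 < c \le C$ such that for all sufficiently small $\varepsilon > 0$, the reverse Hölder characteristic of $w(x) = |x|^{-1/s + \varepsilon}$ satisfies $c\,\varepsilon^{-1/s} \le [w]_{RH_s} \le C\,\varepsilon^{-1/s}$. -/
open MeasureTheory ENNReal

/-- The family of bounded open intervals of `ℝ`. -/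
def realIntervals : Set (Set ℝ) := {I | ∃ a b : ℝ, a < b ∧ I = Set.Ioo a b}

open Set


lemma lint_Ioo_pos (a b r : ℝ) (h0 : 0 ≤ a) (hab : a ≤ b) (hr : -1 < r) :
    ∫⁻ x in Set.Ioo a b, ENNReal.ofReal (|x| ^ r)
      = ENNReal.ofReal ((b ^ (r+1) - a ^ (r+1)) / (r+1)) := by
  have hint : IntegrableOn (fun x : ℝ => x ^ r) (Set.Ioo a b) := by
    have := (intervalIntegral.intervalIntegrable_rpow' hr (a := a) (b := b))
    exact ((intervalIntegrable_iff_integrableOn_Ioc_of_le hab).1 this).mono_set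
      Set.Ioo_subset_Ioc_self
  have h1 : ∫⁻ x in Set.Ioo a b, ENNReal.ofReal (|x| ^ r)
      = ∫⁻ x in Set.Ioo a b, ENNReal.ofReal (x ^ r) := by
    refine setLIntegral_congr_fun measurableSet_Ioo ?_
    intro x hx
    show ENNReal.ofReal (|x| ^ r) = ENNReal.ofReal (x ^ r)
    rw [abs_of_pos (lt_of_le_of_lt h0 hx.1)]
  rw [h1, ← ofReal_integral_eq_lintegral_ofReal hint ?_]
  · congr 1
    rw [← MeasureTheory.integral_Ioc_eq_integral_Ioo,
      ← intervalIntegral.integral_of_le hab, integral_rpow (Or.inl hr)]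
  · filter_upwards [ae_restrict_mem measurableSet_Ioo] with x hx
    exact Real.rpow_nonneg (le_of_lt (lt_of_le_of_lt h0 hx.1)) r

lemma lint_refl (m r : ℝ) :
    ∫⁻ x in Set.Ioo (-m) 0, ENNReal.ofReal (|x| ^ r)
      = ∫⁻ x in Set.Ioo 0 m, ENNReal.ofReal (|x| ^ r) := by
  have h := (Measure.measurePreserving_neg (volume : Measure ℝ)).setLIntegral_comp_preimage_emb
    measurableEmbedding_neg (f := fun x => ENNReal.ofReal (|x| ^ r)) (s := Set.Ioo 0 m)
  simp only [abs_neg] at h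
  rw [← h]
  congr 1
  ext x
  simp [Set.mem_preimage, Set.mem_Ioo, neg_lt, lt_neg]

lemma lint_sym (m r : ℝ) (hm : 0 < m) (hr : -1 < r) :
    ∫⁻ x in Set.Ioo (-m) m, ENNReal.ofReal (|x| ^ r)
      = ENNReal.ofReal (2 * (m ^ (r+1) / (r+1))) := by
  have hsplit : Set.Ioo (-m) m = Set.Ioo (-m) 0 ∪ Set.Ico 0 m :=
    (Set.Ioo_union_Ico_eq_Ioo (by linarith) hm.le).symm
  have hIco : ∫⁻ x in Set.Ico 0 m, ENNReal.ofReal (|x| ^ r)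
      = ∫⁻ x in Set.Ioo 0 m, ENNReal.ofReal (|x| ^ r) := by
    rw [Measure.restrict_congr_set Ioo_ae_eq_Ico.symm]
  have hval : ∫⁻ x in Set.Ioo 0 m, ENNReal.ofReal (|x| ^ r)
      = ENNReal.ofReal (m ^ (r+1) / (r+1)) := by
    rw [lint_Ioo_pos 0 m r le_rfl hm.le hr, Real.zero_rpow (by linarith), sub_zero]
  rw [hsplit, lintegral_union measurableSet_Ico (by
      apply Set.disjoint_left.2; rintro x ⟨_, h2⟩ ⟨h3, _⟩; linarith),
    hIco, lint_refl, hval, two_mul, ENNReal.ofReal_add (div_nonneg (Real.rpow_nonneg hm.le _) (by linarith)) (div_nonneg (Real.rpow_nonneg hm.le _) (by linarith))]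


section main
variable {s ε : ℝ}

/-- per-interval upper bound -/
lemma interval_bound (hs : 1 < s) (hε : 0 < ε) (hε1 : ε < 1) (hεs : ε < 1/s)
    (a b : ℝ) (hab : a < b) :
    ((∫⁻ x in Set.Ioo a b, ENNReal.ofReal (|x| ^ (-(1/s) + ε)) ^ s) / volume (Set.Ioo a b)) ^ (1 / s) /
      ((∫⁻ x in Set.Ioo a b, ENNReal.ofReal (|x| ^ (-(1/s) + ε))) / volume (Set.Ioo a b))
      ≤ ENNReal.ofReal ((2 + (4/s) ^ (1/s)) * ε ^ (-(1/s))) := by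
  have hs0 : (0:ℝ) < s := by linarith
  set δ := -(1/s) + ε with hδ
  set r := δ * s with hrdef
  have hinv1 : 1/s * s = 1 := by field_simp
  have hr1 : r + 1 = ε * s := by rw [hrdef, hδ]; field_simp; ring
  have hr : -1 < r := by nlinarith [mul_pos hε hs0]
  have hr0 : r < 0 := by
    have := (lt_div_iff₀ hs0).1 hεs
    linarith
  have hδneg : δ < 0 := by rw [hδ]; linarith
  have hδ1 : -1 < δ := by
    have : 1/s < 1 := by rw [div_lt_one hs0]; linarith
    rw [hδ]; linarith
  have hws : ∀ x : ℝ, ENNReal.ofReal (|x| ^ δ) ^ s = ENNReal.ofReal (|x| ^ r) := by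
    intro x
    rw [ENNReal.ofReal_rpow_of_nonneg (Real.rpow_nonneg (abs_nonneg x) δ) hs0.le,
      ← Real.rpow_mul (abs_nonneg x)]
  set m := max |a| |b| with hmdef
  have ham : -m ≤ a := by
    have := neg_abs_le a; have := le_max_left |a| |b|; linarith
  have hbm : b ≤ m := le_trans (le_abs_self b) (le_max_right |a| |b|)
  have hm : 0 < m := by
    by_contra h
    push_neg at h
    linarith
  set L := b - a with hL
  have hL0 : 0 < L := by linarith
  have hvol : volume (Set.Ioo a b) = ENNReal.ofReal L := by rw [Real.volume_Ioo]
  have hμ0 : ENNReal.ofReal L ≠ 0 := (ENNReal.ofReal_pos.2 hL0).ne'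
  have hμtop : ENNReal.ofReal L ≠ ⊤ := ENNReal.ofReal_ne_top
  -- lower bound for the average of w
  have habs : ∀ x ∈ Set.Ioo a b, |x| ≤ m := by
    intro x hx
    rw [abs_le]
    exact ⟨by linarith [hx.1], by linarith [hx.2]⟩
  have hW : ENNReal.ofReal L * ENNReal.ofReal (m ^ δ)
      ≤ ∫⁻ x in Set.Ioo a b, ENNReal.ofReal (|x| ^ δ) := by
    rw [mul_comm, ← hvol, ← setLIntegral_const]
    refine lintegral_mono_ae ?_
    have h0 : ∀ᵐ x : ℝ ∂(volume.restrict (Set.Ioo a b)), x ≠ 0 := by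
      refine ae_restrict_of_ae ?_
      rw [ae_iff]
      simpa using measure_singleton (0:ℝ)
    filter_upwards [ae_restrict_mem measurableSet_Ioo, h0] with x hx hx0
    exact ENNReal.ofReal_le_ofReal
      (Real.rpow_le_rpow_of_nonpos (abs_pos.2 hx0) (habs x hx) hδneg.le)
  have hWdiv : ENNReal.ofReal (m ^ δ)
      ≤ (∫⁻ x in Set.Ioo a b, ENNReal.ofReal (|x| ^ δ)) / volume (Set.Ioo a b) := by
    rw [hvol, ENNReal.le_div_iff_mul_le (Or.inl hμ0) (Or.inl hμtop), mul_comm]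
    exact hW
  have hmδ : (0:ℝ) < m ^ δ := Real.rpow_pos_of_pos hm δ
  rcases le_or_gt m (2*(b-a)) with hA | hB
  · -- case A : interval close to the origin
    have hsub : Set.Ioo a b ⊆ Set.Ioo (-m) m := Set.Ioo_subset_Ioo ham hbm
    have hAint : (∫⁻ x in Set.Ioo a b, ENNReal.ofReal (|x| ^ δ) ^ s)
        ≤ ENNReal.ofReal (2 * (m ^ (r+1) / (r+1))) := by
      simp_rw [hws]
      rw [← lint_sym m r hm hr]
      exact lintegral_mono_set hsub
    have half_le : ENNReal.ofReal (m/2) ≤ ENNReal.ofReal L :=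
      ENNReal.ofReal_le_ofReal (by linarith)
    have step1 : (∫⁻ x in Set.Ioo a b, ENNReal.ofReal (|x| ^ δ) ^ s) / volume (Set.Ioo a b)
        ≤ ENNReal.ofReal ((4/(ε*s)) * m ^ r) := by
      rw [hvol]
      refine le_trans (ENNReal.div_le_div hAint half_le) ?_
      rw [← ENNReal.ofReal_div_of_pos (half_pos hm)]
      refine ENNReal.ofReal_le_ofReal (le_of_eq ?_)
      rw [Real.rpow_add hm, Real.rpow_one, hr1]
      have hεs0 : (0:ℝ) < ε * s := mul_pos hε hs0
      field_simp
      ring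
    have step2 : ((∫⁻ x in Set.Ioo a b, ENNReal.ofReal (|x| ^ δ) ^ s) / volume (Set.Ioo a b)) ^ (1/s)
        ≤ ENNReal.ofReal ((4/(ε*s)) ^ (1/s) * m ^ δ) := by
      refine le_trans (ENNReal.rpow_le_rpow step1 (by positivity)) ?_
      rw [ENNReal.ofReal_rpow_of_nonneg (by positivity) (by positivity)]
      refine ENNReal.ofReal_le_ofReal (le_of_eq ?_)
      rw [Real.mul_rpow (by positivity) (Real.rpow_nonneg hm.le r),
        ← Real.rpow_mul hm.le]
      congr 2
      rw [hrdef]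
      field_simp
    refine le_trans (ENNReal.div_le_div step2 hWdiv) ?_
    rw [← ENNReal.ofReal_div_of_pos hmδ, mul_div_assoc, div_self hmδ.ne', mul_one]
    refine ENNReal.ofReal_le_ofReal ?_
    have : (4/(ε*s)) ^ (1/s) = (4/s) ^ (1/s) * ε ^ (-(1/s)) := by
      have h4 : (4:ℝ)/(ε*s) = (4/s) * ε⁻¹ := by field_simp
      rw [h4, Real.mul_rpow (by positivity) (by positivity),
        Real.inv_rpow hε.le, ← Real.rpow_neg hε.le]
    rw [this]
    have hC1 : (4/s) ^ (1/s) ≤ 2 + (4/s) ^ (1/s) := by linarith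
    exact mul_le_mul_of_nonneg_right hC1 (Real.rpow_nonneg hε.le _)
  · -- case B : interval far from the origin
    have hfar : ∀ x ∈ Set.Ioo a b, m/2 ≤ |x| := by
      intro x hx
      rcases le_or_gt a 0 with ha0 | ha0
      · -- then b < 0
        have hb0 : b < 0 := by
          by_contra h
          push_neg at h
          have h1 : |a| ≤ b - a := by rw [abs_of_nonpos ha0]; linarith
          have h2 : |b| ≤ b - a := by rw [abs_of_nonneg h]; linarith
          have : m ≤ b - a := max_le h1 h2
          linarith
        have hma : m = -a := by
          rw [hmdef, abs_of_neg (lt_of_le_of_lt (le_of_lt hab) hb0), abs_of_neg hb0]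
          exact max_eq_left (by linarith)
        rw [abs_of_neg (lt_trans hx.2 hb0)]
        have := hx.2
        rw [hma] at hB ⊢
        linarith
      · have hmb : m = b := by
          rw [hmdef, abs_of_pos ha0, abs_of_pos (lt_trans ha0 hab)]
          exact max_eq_right (by linarith)
        rw [abs_of_pos (lt_trans ha0 hx.1)]
        have := hx.1
        rw [hmb] at hB ⊢
        linarith
    have hAint : (∫⁻ x in Set.Ioo a b, ENNReal.ofReal (|x| ^ δ) ^ s)
        ≤ ENNReal.ofReal ((m/2) ^ r) * volume (Set.Ioo a b) := by
      rw [← setLIntegral_const]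
      refine lintegral_mono_ae ?_
      filter_upwards [ae_restrict_mem measurableSet_Ioo] with x hx
      rw [hws]
      exact ENNReal.ofReal_le_ofReal
        (Real.rpow_le_rpow_of_nonpos (half_pos hm) (hfar x hx) hr0.le)
    have step1 : (∫⁻ x in Set.Ioo a b, ENNReal.ofReal (|x| ^ δ) ^ s) / volume (Set.Ioo a b)
        ≤ ENNReal.ofReal ((m/2) ^ r) := ENNReal.div_le_of_le_mul hAint
    have step2 : ((∫⁻ x in Set.Ioo a b, ENNReal.ofReal (|x| ^ δ) ^ s) / volume (Set.Ioo a b)) ^ (1/s)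
        ≤ ENNReal.ofReal ((m/2) ^ δ) := by
      refine le_trans (ENNReal.rpow_le_rpow step1 (by positivity)) ?_
      rw [ENNReal.ofReal_rpow_of_nonneg (Real.rpow_nonneg (by positivity) r) (by positivity),
        ← Real.rpow_mul (by positivity)]
      refine le_of_eq ?_
      congr 2
      rw [hrdef]
      field_simp
    refine le_trans (ENNReal.div_le_div step2 hWdiv) ?_
    rw [← ENNReal.ofReal_div_of_pos hmδ]
    refine ENNReal.ofReal_le_ofReal ?_
    have hratio : (m/2) ^ δ / m ^ δ = 2 ^ (-δ) := by
      have : m/2 = m * 2⁻¹ := by ring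
      rw [this, Real.mul_rpow hm.le (by norm_num), Real.inv_rpow (by norm_num),
        ← Real.rpow_neg (by norm_num)]
      field_simp
    rw [hratio]
    have h2 : (2:ℝ) ^ (-δ) ≤ 2 := by
      nth_rewrite 2 [show (2:ℝ) = 2 ^ (1:ℝ) by norm_num]
      refine Real.rpow_le_rpow_of_exponent_le one_le_two ?_
      have : 1/s ≤ 1 := by rw [div_le_one hs0]; linarith
      rw [hδ]; linarith
    have hεp : (1:ℝ) ≤ ε ^ (-(1/s)) :=
      Real.one_le_rpow_of_pos_of_le_one_of_nonpos hε hε1.le (neg_nonpos.2 (by positivity))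
    nlinarith [Real.rpow_nonneg (show (0:ℝ) ≤ 4/s by positivity) (1/s), hεp, h2]

/-- lower bound at the interval `(0,1)` -/
lemma lower_bound (hs : 1 < s) (hε : 0 < ε) (hεs : ε < 1/s) :
    ENNReal.ofReal ((s ^ (-(1/s)) * (1 - 1/s)) * ε ^ (-(1/s)))
      ≤ ((∫⁻ x in Set.Ioo (0:ℝ) 1, ENNReal.ofReal (|x| ^ (-(1/s) + ε)) ^ s) / volume (Set.Ioo (0:ℝ) 1)) ^ (1 / s) /
      ((∫⁻ x in Set.Ioo (0:ℝ) 1, ENNReal.ofReal (|x| ^ (-(1/s) + ε))) / volume (Set.Ioo (0:ℝ) 1)) := by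
  have hs0 : (0:ℝ) < s := by linarith
  set δ := -(1/s) + ε with hδ
  set r := δ * s with hrdef
  have hr1 : r + 1 = ε * s := by rw [hrdef, hδ]; field_simp; ring
  have hεs0 : (0:ℝ) < ε * s := mul_pos hε hs0
  have hr : -1 < r := by linarith
  have hδ1 : -1 < δ := by
    have : 1/s < 1 := by rw [div_lt_one hs0]; linarith
    rw [hδ]; linarith
  have hδpos : 0 < δ + 1 := by linarith
  have hws : ∀ x : ℝ, ENNReal.ofReal (|x| ^ δ) ^ s = ENNReal.ofReal (|x| ^ r) := by
    intro x
    rw [ENNReal.ofReal_rpow_of_nonneg (Real.rpow_nonneg (abs_nonneg x) δ) hs0.le,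
      ← Real.rpow_mul (abs_nonneg x)]
  have hvol : volume (Set.Ioo (0:ℝ) 1) = 1 := by
    rw [Real.volume_Ioo, sub_zero, ENNReal.ofReal_one]
  have hA : (∫⁻ x in Set.Ioo (0:ℝ) 1, ENNReal.ofReal (|x| ^ δ) ^ s)
      = ENNReal.ofReal (1/(ε*s)) := by
    simp_rw [hws]
    rw [lint_Ioo_pos 0 1 r le_rfl zero_le_one hr, Real.one_rpow,
      Real.zero_rpow (by linarith), sub_zero, hr1]
  have hWint : (∫⁻ x in Set.Ioo (0:ℝ) 1, ENNReal.ofReal (|x| ^ δ))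
      = ENNReal.ofReal (1/(δ+1)) := by
    rw [lint_Ioo_pos 0 1 δ le_rfl zero_le_one hδ1, Real.one_rpow,
      Real.zero_rpow (by linarith), sub_zero]
  rw [hvol, hA, hWint, div_one, div_one,
    ENNReal.ofReal_rpow_of_nonneg (by positivity) (by positivity),
    ← ENNReal.ofReal_div_of_pos (by positivity)]
  refine ENNReal.ofReal_le_ofReal ?_
  rw [one_div (δ+1), div_inv_eq_mul]
  have hkey : (1/(ε*s)) ^ (1/s) = ε ^ (-(1/s)) * s ^ (-(1/s)) := by
    rw [one_div, Real.inv_rpow (by positivity), Real.mul_rpow hε.le hs0.le, mul_inv,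
      ← Real.rpow_neg hε.le, ← Real.rpow_neg hs0.le]
  rw [hkey]
  have h1s : 1 - 1/s ≤ δ + 1 := by rw [hδ]; linarith
  have h1s0 : (0:ℝ) ≤ 1 - 1/s := by
    have : 1/s ≤ 1 := by rw [div_le_one hs0]; linarith
    linarith
  nlinarith [Real.rpow_nonneg hε.le (-(1/s)), Real.rpow_nonneg hs0.le (-(1/s)),
    mul_nonneg (Real.rpow_nonneg hε.le (-(1/s))) (Real.rpow_nonneg hs0.le (-(1/s)))]

end main

/-- for `s > 1`, `[|x|^{-1/s+ε}]_{RH_s} ≍ ε^{-1/s}` as `ε → 0`. -/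
theorem stmt5 (s : ℝ) (hs : 1 < s) :
    ∃ c C : ℝ, 0 < c ∧ c ≤ C ∧ ∃ ε₀ > (0:ℝ), ∀ ε : ℝ, 0 < ε → ε < ε₀ →
      ENNReal.ofReal (c * ε ^ (-(1/s)))
          ≤ rhConst volume realIntervals s (fun x => ENNReal.ofReal (|x| ^ (-(1/s) + ε))) ∧
      rhConst volume realIntervals s (fun x => ENNReal.ofReal (|x| ^ (-(1/s) + ε)))
          ≤ ENNReal.ofReal (C * ε ^ (-(1/s))) := by
  have hs0 : (0:ℝ) < s := by linarith
  have hs1 : 1/s < 1 := by rw [div_lt_one hs0]; linarith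
  refine ⟨s ^ (-(1/s)) * (1 - 1/s), 2 + (4/s) ^ (1/s), ?_, ?_, min (1/s) 1, ?_, ?_⟩
  · exact mul_pos (Real.rpow_pos_of_pos hs0 _) (by linarith)
  · have h1 : s ^ (-(1/s)) ≤ 1 :=
      Real.rpow_le_one_of_one_le_of_nonpos hs.le (neg_nonpos.2 (by positivity))
    have h2 : (0:ℝ) ≤ (4/s) ^ (1/s) := Real.rpow_nonneg (by positivity) _
    have h3 : (0:ℝ) ≤ s ^ (-(1/s)) := Real.rpow_nonneg hs0.le _
    have h4 : (0:ℝ) ≤ 1 - 1/s := by linarith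
    nlinarith [mul_le_mul h1 (show 1-1/s ≤ (1:ℝ) by have := one_div_pos.2 hs0; linarith) h4 zero_le_one]
  · exact lt_min (by positivity) one_pos
  · intro ε hε hεε₀
    have hεs : ε < 1/s := lt_of_lt_of_le hεε₀ (min_le_left _ _)
    have hε1 : ε < 1 := lt_of_lt_of_le hεε₀ (min_le_right _ _)
    constructor
    · have hmem : Set.Ioo (0:ℝ) 1 ∈ realIntervals := ⟨0, 1, one_pos, rfl⟩
      refine le_trans (lower_bound hs hε hεs) (le_biSup (fun B => ((∫⁻ x in B, (fun x => ENNReal.ofReal (|x| ^ (-(1/s) + ε))) x ^ s) / volume B) ^ (1 / s) / ((∫⁻ x in B, (fun x => ENNReal.ofReal (|x| ^ (-(1/s) + ε))) x) / volume B)) hmem)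
    · refine iSup₂_le ?_
      rintro B ⟨a, b, hab, rfl⟩
      exact interval_bound hs hε hε1 hεs a b hab
end

section
/- Lower bound for sparse form on power functions: let $1 \le p_0 < q_0' < \infty$ with $q_0'/p_0' < 1$, and for $\varepsilon \in (0, 1/2)$ set $f_\varepsilon(x) = x^{-1/p_0+\varepsilon}\chi_{[0,1]}$ and $g_\varepsilon(x) = x^{-1/p_0'+\varepsilon}\chi_{[0,1]}$. Then with $\mathcal{S} = \{[0,2^{-n}] : n \ge 0\}$ there is a constant $c > 0$ (independent of $\varepsilon$) such that $\sum_{I \in \mathcal{S}} |I|\, \langle |f_\varepsilon|^{p_0}\rangle_I^{1/p_0}\, \langle |g_\varepsilon|^{q_0'}\rangle_I^{1/q_0'} \ge c\, \varepsilon^{-1/p_0}\varepsilon^{-1}$. -/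
open MeasureTheory

lemma stmt17_aux_int (T a : ℝ) (hT : 0 < T) (ha : -1 < a) :
    ∫ x in Set.Ioc (0:ℝ) T, x ^ a = T ^ (a + 1) / (a + 1) := by
  rw [← intervalIntegral.integral_of_le hT.le, integral_rpow (Or.inl ha),
    Real.zero_rpow (by linarith), sub_zero]

/-- lower bound for the sparse form on power functions. With
`f_ε(x) = x^{-1/p₀+ε}` and `g_ε(x) = x^{-1/p₀'+ε}` on `[0,1]` (so `1/p₀' = 1 - 1/p₀`),
and the sparse collection `S = {[0, 2^{-n}]}`, the sparse form
`∑_n |I_n| ⟨f_ε^{p₀}⟩_{I_n}^{1/p₀} ⟨g_ε^{q₀'}⟩_{I_n}^{1/q₀'}` is bounded below by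
`c ε^{-1/p₀} ε⁻¹`, provided `1 ≤ p₀ < q₀' < ∞` and `q₀'/p₀' < 1`. -/
theorem stmt17 (p0 q0c : ℝ) (hp0 : 1 ≤ p0) (hlt : p0 < q0c)
    (hcond : q0c * (1 - 1 / p0) < 1) :
    ∃ c > (0:ℝ), ∀ ε : ℝ, 0 < ε → ε < 1/2 →
      c * ε ^ (-(1/p0)) * ε⁻¹ ≤
        ∑' n : ℕ, (2:ℝ) ^ (-(n:ℤ)) *
          (((2:ℝ) ^ (n:ℕ) *
            ∫ x in Set.Ioc (0:ℝ) ((2:ℝ) ^ (-(n:ℤ))), (x ^ (-(1/p0) + ε)) ^ p0)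
              ^ (1/p0)) *
          (((2:ℝ) ^ (n:ℕ) *
            ∫ x in Set.Ioc (0:ℝ) ((2:ℝ) ^ (-(n:ℤ))), (x ^ (-(1 - 1/p0) + ε)) ^ q0c)
              ^ (1/q0c)) := by
  have hp0' : 0 < p0 := lt_of_lt_of_le one_pos hp0
  have hq1 : 1 < q0c := lt_of_le_of_lt hp0 hlt
  have hq0 : 0 < q0c := lt_trans one_pos hq1
  have hlog : 0 < Real.log 2 := Real.log_pos one_lt_two
  have h1p : (0:ℝ) ≤ 1 - 1 / p0 := by
    have : 1 / p0 ≤ 1 := by rw [div_le_one hp0']; exact hp0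
    linarith
  refine ⟨p0 ^ (-(1/p0)) * (1 + q0c/2) ^ (-(1/q0c)) * (2 * Real.log 2)⁻¹, ?_, ?_⟩
  · have h1 : (0:ℝ) < p0 ^ (-(1/p0)) := Real.rpow_pos_of_pos hp0' _
    have h2 : (0:ℝ) < (1 + q0c/2) ^ (-(1/q0c)) := Real.rpow_pos_of_pos (by linarith) _
    positivity
  intro ε hε hε2
  set a1 : ℝ := (-(1/p0) + ε) * p0 with ha1def
  set a2 : ℝ := (-(1 - 1/p0) + ε) * q0c with ha2def
  have ha1 : a1 + 1 = p0 * ε := by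
    rw [ha1def]; field_simp; ring
  have ha1pos : -1 < a1 := by nlinarith [mul_pos hp0' hε]
  have ha2pos : 0 < a2 + 1 := by
    rw [ha2def]; nlinarith [mul_pos hε hq0]
  have ha2' : -1 < a2 := by linarith
  set r : ℝ := (2:ℝ) ^ (-(2*ε)) with hrdef
  set A : ℝ := (p0*ε) ^ (-(1/p0)) * (a2+1) ^ (-(1/q0c)) with hAdef
  have hr0 : 0 < r := Real.rpow_pos_of_pos two_pos _
  have hr1 : r < 1 := Real.rpow_lt_one_of_one_lt_of_neg one_lt_two (by linarith)
  -- compute each summand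
  have key : ∀ n : ℕ, (2:ℝ) ^ (-(n:ℤ)) *
          (((2:ℝ) ^ (n:ℕ) *
            ∫ x in Set.Ioc (0:ℝ) ((2:ℝ) ^ (-(n:ℤ))), (x ^ (-(1/p0) + ε)) ^ p0)
              ^ (1/p0)) *
          (((2:ℝ) ^ (n:ℕ) *
            ∫ x in Set.Ioc (0:ℝ) ((2:ℝ) ^ (-(n:ℤ))), (x ^ (-(1 - 1/p0) + ε)) ^ q0c)
              ^ (1/q0c)) = A * r ^ n := by
    intro n
    have hT : (0:ℝ) < (2:ℝ) ^ (-(n:ℤ)) := zpow_pos two_pos _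
    have hI1 : (∫ x in Set.Ioc (0:ℝ) ((2:ℝ) ^ (-(n:ℤ))), (x ^ (-(1/p0) + ε)) ^ p0)
        = ((2:ℝ) ^ (-(n:ℤ))) ^ (a1 + 1) / (a1 + 1) := by
      rw [MeasureTheory.setIntegral_congr_fun measurableSet_Ioc
        (fun x hx => (Real.rpow_mul hx.1.le (-(1/p0) + ε) p0).symm)]
      exact stmt17_aux_int _ _ hT ha1pos
    have hI2 : (∫ x in Set.Ioc (0:ℝ) ((2:ℝ) ^ (-(n:ℤ))), (x ^ (-(1 - 1/p0) + ε)) ^ q0c)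
        = ((2:ℝ) ^ (-(n:ℤ))) ^ (a2 + 1) / (a2 + 1) := by
      rw [MeasureTheory.setIntegral_congr_fun measurableSet_Ioc
        (fun x hx => (Real.rpow_mul hx.1.le (-(1 - 1/p0) + ε) q0c).symm)]
      exact stmt17_aux_int _ _ hT ha2'
    rw [hI1, hI2]
    have hTr : ((2:ℝ) ^ (-(n:ℤ)) : ℝ) = (2:ℝ) ^ (-(n:ℝ)) := by
      rw [← Real.rpow_intCast 2 (-(n:ℤ))]; push_cast; ring_nf
    have h2n : ((2:ℝ) ^ (n:ℕ)) = (2:ℝ) ^ ((n:ℕ):ℝ) := (Real.rpow_natCast 2 n).symm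
    rw [hTr, h2n]
    have e : ∀ a : ℝ, (2:ℝ) ^ ((n:ℕ):ℝ) * ((2:ℝ) ^ (-(n:ℝ))) ^ (a + 1)
        = (2:ℝ) ^ (-(n:ℝ) * a) := by
      intro a
      rw [← Real.rpow_mul (by norm_num : (0:ℝ) ≤ 2), ← Real.rpow_add two_pos]
      congr 1; ring
    rw [← mul_div_assoc, ← mul_div_assoc, e a1, e a2,
      Real.div_rpow (Real.rpow_nonneg (by norm_num) _) (by linarith),
      Real.div_rpow (Real.rpow_nonneg (by norm_num) _) ha2pos.le,
      ← Real.rpow_mul (by norm_num : (0:ℝ) ≤ 2),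
      ← Real.rpow_mul (by norm_num : (0:ℝ) ≤ 2)]
    have hrn : r ^ n = (2:ℝ) ^ (-(2*ε) * (n:ℝ)) := by
      rw [hrdef, ← Real.rpow_natCast ((2:ℝ) ^ (-(2*ε))) n,
        ← Real.rpow_mul (by norm_num : (0:ℝ) ≤ 2)]
    rw [hrn, ha1, hAdef]
    rw [Real.rpow_neg (by positivity : (0:ℝ) ≤ p0 * ε),
      Real.rpow_neg (by linarith : (0:ℝ) ≤ a2 + 1)]
    have hP : (2:ℝ) ^ (-(n:ℝ)) * (2:ℝ) ^ (-(n:ℝ) * a1 * (1/p0)) *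
        (2:ℝ) ^ (-(n:ℝ) * a2 * (1/q0c)) = (2:ℝ) ^ (-(2*ε) * (n:ℝ)) := by
      rw [← Real.rpow_add two_pos, ← Real.rpow_add two_pos]
      congr 1
      rw [ha1def, ha2def]; field_simp; ring
    calc (2:ℝ) ^ (-(n:ℝ)) * ((2:ℝ) ^ (-(n:ℝ) * a1 * (1/p0)) / (p0*ε) ^ (1/p0)) *
          ((2:ℝ) ^ (-(n:ℝ) * a2 * (1/q0c)) / (a2+1) ^ (1/q0c))
        = ((2:ℝ) ^ (-(n:ℝ)) * (2:ℝ) ^ (-(n:ℝ) * a1 * (1/p0)) *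
            (2:ℝ) ^ (-(n:ℝ) * a2 * (1/q0c))) *
          (((p0*ε) ^ (1/p0))⁻¹ * (((a2+1) ^ (1/q0c))⁻¹)) := by
          rw [div_eq_mul_inv, div_eq_mul_inv]; ring
      _ = ((p0*ε) ^ (1/p0))⁻¹ * ((a2+1) ^ (1/q0c))⁻¹ * (2:ℝ) ^ (-(2*ε) * (n:ℝ)) := by
          rw [hP]; ring
  rw [tsum_congr key, tsum_mul_left, tsum_geometric_of_lt_one hr0.le hr1]
  -- now the numerical lower bound
  have hr_le : 1 - r ≤ 2 * Real.log 2 * ε := by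
    have h := Real.add_one_le_exp (Real.log 2 * (-(2*ε)))
    rw [← Real.rpow_def_of_pos two_pos] at h
    rw [← hrdef] at h
    nlinarith
  have h1r : 0 < 1 - r := by linarith
  have piece1 : ((1 + q0c/2) ^ (-(1/q0c)) : ℝ) ≤ (a2+1) ^ (-(1/q0c)) := by
    rw [Real.rpow_neg (by linarith : (0:ℝ) ≤ 1 + q0c/2),
      Real.rpow_neg (by linarith : (0:ℝ) ≤ a2 + 1)]
    apply inv_anti₀ (Real.rpow_pos_of_pos ha2pos _)
    apply Real.rpow_le_rpow ha2pos.le _ (by positivity)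
    rw [ha2def]
    nlinarith [mul_le_mul_of_nonneg_right hε2.le hq0.le, mul_nonneg hq0.le h1p]
  have piece2 : ((2 * Real.log 2)⁻¹ * ε⁻¹ : ℝ) ≤ (1 - r)⁻¹ := by
    rw [← mul_inv]
    exact inv_anti₀ h1r hr_le
  have hsplit : A = p0 ^ (-(1/p0)) * ε ^ (-(1/p0)) * (a2+1) ^ (-(1/q0c)) := by
    rw [hAdef, Real.mul_rpow hp0'.le hε.le]
  calc p0 ^ (-(1/p0)) * (1 + q0c/2) ^ (-(1/q0c)) * (2 * Real.log 2)⁻¹ *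
        ε ^ (-(1/p0)) * ε⁻¹
      = (p0 ^ (-(1/p0)) * ε ^ (-(1/p0))) *
        ((1 + q0c/2) ^ (-(1/q0c)) * ((2 * Real.log 2)⁻¹ * ε⁻¹)) := by ring
    _ ≤ (p0 ^ (-(1/p0)) * ε ^ (-(1/p0))) * ((a2+1) ^ (-(1/q0c)) * (1 - r)⁻¹) := by
        apply mul_le_mul_of_nonneg_left _ (by positivity)
        exact mul_le_mul piece1 piece2 (by positivity) (by positivity)
    _ = A * (1 - r)⁻¹ := by rw [hsplit]; ring
end
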